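/- Let k be a field. The representation M = ∏_{i ∈ ℕ} k_{[-i,∞)} of the real line (pointwise product of interval representations) is not isomorphic to any direct sum of interval representations. -/

import Mathlib

open scoped Classical DirectSum

universe u v

/-- A persistence module (representation) of a preordered set `T`
over a field `k`: a functor from `T` to `k`-vector spaces. -/
structure PersMod (T : Type u) [Preorder T] (k : Type v) [Field k] where
  V : T → Type v
  [addCommGroup : ∀ t, AddCommGroup (V t)]
  [module : ∀ t, Module k (V t)]
  map : ∀ {s t : T}, s ≤ t → (V s →ₗ[k] V t)
  map_id : ∀ t : T, map (le_refl t) = LinearMap.id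
  map_comp : ∀ {s t u : T} (h₁ : s ≤ t) (h₂ : t ≤ u),
    map (h₁.trans h₂) = (map h₂).comp (map h₁)

attribute [instance] PersMod.addCommGroup PersMod.module

/-- A subset of a preordered set is convex (an interval, in a total order). -/
def IsConvex {T : Type u} [Preorder T] (J : Set T) : Prop :=
  ∀ ⦃a b c : T⦄, a ≤ b → b ≤ c → a ∈ J → c ∈ J → b ∈ J

/-- The interval representation `k_J`: `k` at points of `J`, `0` elsewhere,
identity structure maps within `J`. -/
noncomputable def intervalRep (T : Type u) [Preorder T] (k : Type v) [Field k]
    (J : Set T) (hJ : IsConvex J) : PersMod T k where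
  V t := ↥(if t ∈ J then (⊤ : Submodule k k) else ⊥)
  map {s t} h :=
    { toFun := fun x => ⟨if t ∈ J then (x : k) else 0, by
        split_ifs <;> first | exact Submodule.mem_top | exact Submodule.zero_mem _⟩
      map_add' := fun x y => by
        by_cases ht : t ∈ J <;> ext <;> simp [ht]
      map_smul' := fun c x => by
        by_cases ht : t ∈ J <;> ext <;> simp [ht] }
  map_id t := by
    ext x
    by_cases ht : t ∈ J
    · simp [ht]
    · have hx : (x : k) = 0 := by
        have h2 := x.2; simp only [if_neg ht] at h2; exact (Submodule.mem_bot k).1 h2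
      show (if t ∈ J then (x : k) else 0) = (x : k); rw [if_neg ht, hx]
  map_comp {s t u} h₁ h₂ := by
    ext x
    by_cases hu : u ∈ J
    · by_cases ht : t ∈ J
      · show (if u ∈ J then (x : k) else 0) = (if u ∈ J then (if t ∈ J then (x : k) else 0) else 0)
        simp only [if_pos hu, if_pos ht]
      · by_cases hs : s ∈ J
        · exact absurd (hJ h₁ h₂ hs hu) ht
        · have hx : (x : k) = 0 := by
            have h2 := x.2; simp only [if_neg hs] at h2; exact (Submodule.mem_bot k).1 h2
          simp [hu, ht, hx]
    · simp [hu]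

/-- The space of morphisms of representations `M → N`, as a submodule of
the module of all families of linear maps. -/
def homSubmodule {T : Type u} [Preorder T] (k : Type v) [Field k]
    (M N : PersMod T k) : Submodule k (∀ t, M.V t →ₗ[k] N.V t) where
  carrier := {f | ∀ (s t : T) (h : s ≤ t) (x : M.V s),
    N.map h (f s x) = f t (M.map h x)}
  add_mem' := by
    intro a b ha hb s t h x
    simp [ha s t h x, hb s t h x]
  zero_mem' := by intro s t h x; simp
  smul_mem' := by
    intro c a ha s t h x
    simp [ha s t h x]

/-- An isomorphism of persistence modules. -/
structure PersIso {T : Type u} [Preorder T] {k : Type v} [Field k]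
    (M N : PersMod T k) where
  e : ∀ t, M.V t ≃ₗ[k] N.V t
  natural : ∀ {s t : T} (h : s ≤ t) (x : M.V s),
    e t (M.map h x) = N.map h (e s x)

/-- The pointwise product of a family of persistence modules. -/
def prodRep {T : Type u} [Preorder T] (k : Type v) [Field k]
    (ι : Type v) (F : ι → PersMod T k) : PersMod T k where
  V t := ∀ i, (F i).V t
  map {s t} h := LinearMap.pi fun i => ((F i).map h).comp (LinearMap.proj i)
  map_id t := by
    ext x i
    simp [(F i).map_id]
  map_comp h₁ h₂ := by
    ext x i
    simp [(F i).map_comp h₁ h₂]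

/-- The direct sum of a family of persistence modules. -/
noncomputable def dSum {T : Type u} [Preorder T] (k : Type v) [Field k]
    (ι : Type v) (F : ι → PersMod T k) : PersMod T k where
  V t := ⨁ i, (F i).V t
  map {s t} h :=
    letI := Classical.decEq ι
    DirectSum.toModule k ι _ fun i =>
      (DirectSum.lof k ι (fun j => (F j).V t) i).comp ((F i).map h)
  map_id t := by
    letI := Classical.decEq ι
    refine DirectSum.linearMap_ext _ fun i => ?_
    ext x
    simp [DirectSum.toModule_lof, (F i).map_id]
  map_comp {s t u} h₁ h₂ := by
    letI := Classical.decEq ι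
    refine DirectSum.linearMap_ext _ fun i => ?_
    ext x
    simp [DirectSum.toModule_lof, (F i).map_comp h₁ h₂]

theorem isConvex_Ici {T : Type u} [LinearOrder T] (a : T) : IsConvex (Set.Ici a) :=
  fun _ _ _ h1 _ ha _ => le_trans ha h1

/-! ### Auxiliary material for the proof -/

section AuxProof

open Cardinal

variable {k : Type} [Field k]

/-- Abbreviation for the product module `∏ k_{[-i,∞)}`. -/
noncomputable def MRep (k : Type) [Field k] : PersMod ℝ k :=
  prodRep k ℕ (fun i => intervalRep ℝ k (Set.Ici (-(i : ℝ))) (isConvex_Ici _))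

/-- Abbreviation for the direct sum of interval modules. -/
noncomputable def DRep (k : Type) [Field k] {ι : Type} (J : ι → Set ℝ)
    (hJ : ∀ i, IsConvex (J i)) : PersMod ℝ k :=
  dSum k ι (fun i => intervalRep ℝ k (J i) (hJ i))

lemma hnle (n : ℕ) : (-(n : ℝ)) ≤ 0 := neg_nonpos.mpr (Nat.cast_nonneg n)

lemma zero_mem_Ici (i : ℕ) : (0 : ℝ) ∈ Set.Ici (-(i : ℝ)) := by
  simp [Set.mem_Ici]

lemma neg_mem_Ici_iff (n i : ℕ) : (-(n : ℝ)) ∈ Set.Ici (-(i : ℝ)) ↔ n ≤ i := by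
  simp [Set.mem_Ici]

lemma coe_eq_zero_of_not {P : Prop} (hP : ¬ P)
    (y : ↥(if P then (⊤ : Submodule k k) else ⊥)) : (y : k) = 0 := by
  obtain ⟨c, hc⟩ := y
  rw [if_neg hP] at hc
  exact (Submodule.mem_bot k).1 hc

/-- The value of an element of an interval representation, as a linear map to `k`. -/
noncomputable def valIR (J : Set ℝ) (hJ : IsConvex J) (t : ℝ) :
    (intervalRep ℝ k J hJ).V t →ₗ[k] k :=
  Submodule.subtype (if t ∈ J then (⊤ : Submodule k k) else ⊥)

lemma valIR_eq_zero {J : Set ℝ} {hJ : IsConvex J} {t : ℝ} (ht : t ∉ J)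
    (y : (intervalRep ℝ k J hJ).V t) : valIR J hJ t y = 0 :=
  coe_eq_zero_of_not ht y

lemma valIR_map {J : Set ℝ} {hJ : IsConvex J} {s t : ℝ} (h : s ≤ t)
    (y : (intervalRep ℝ k J hJ).V s) :
    valIR J hJ t ((intervalRep ℝ k J hJ).map h y) =
      if t ∈ J then valIR J hJ s y else 0 := rfl

/-- The `i`-th coordinate of `MRep` at time `t`, as a linear functional. -/
noncomputable def coordM (k : Type) [Field k] (t : ℝ) (i : ℕ) : (MRep k).V t →ₗ[k] k :=
  (valIR (Set.Ici (-(i : ℝ))) (isConvex_Ici _) t).comp (LinearMap.proj i)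

lemma coordM_map {s t : ℝ} (h : s ≤ t) (y : (MRep k).V s) (i : ℕ) :
    coordM k t i ((MRep k).map h y) =
      if t ∈ Set.Ici (-(i : ℝ)) then coordM k s i y else 0 := rfl

lemma mem_rangeM {n : ℕ} {x : (MRep k).V 0}
    (hx : x ∈ LinearMap.range ((MRep k).map (hnle n))) {i : ℕ} (hi : i < n) :
    coordM k 0 i x = 0 := by
  obtain ⟨y, rfl⟩ := hx
  rw [coordM_map, if_pos (zero_mem_Ici i)]
  exact valIR_eq_zero (by rw [neg_mem_Ici_iff]; omega) (y i)

lemma mem_rangeM_of {n : ℕ} {x : (MRep k).V 0}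
    (hx : ∀ i < n, coordM k 0 i x = 0) :
    x ∈ LinearMap.range ((MRep k).map (hnle n)) := by
  refine ⟨fun i => ⟨if (-(n : ℝ)) ∈ Set.Ici (-(i : ℝ)) then coordM k 0 i x else 0,
    by split_ifs <;> first | exact Submodule.mem_top | exact Submodule.zero_mem _⟩, ?_⟩
  funext i
  apply Subtype.ext
  show coordM k 0 i ((MRep k).map (hnle n) _) = coordM k 0 i x
  refine (coordM_map (hnle n) _ i).trans ?_
  rw [if_pos (zero_mem_Ici i)]
  show (if (-(n : ℝ)) ∈ Set.Ici (-(i : ℝ)) then coordM k 0 i x else 0) = coordM k 0 i x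
  by_cases h : (-(n : ℝ)) ∈ Set.Ici (-(i : ℝ))
  · rw [if_pos h]
  · rw [if_neg h, hx i (by rw [neg_mem_Ici_iff] at h; omega)]

lemma eq_zero_of_mem_all {x : (MRep k).V 0}
    (hx : ∀ n : ℕ, x ∈ LinearMap.range ((MRep k).map (hnle n))) : x = 0 := by
  funext i
  apply Subtype.ext
  show coordM k 0 i x = coordM k 0 i 0
  rw [map_zero]
  exact mem_rangeM (hx (i + 1)) (Nat.lt_succ_self i)

/-- Projection onto the first `n` coordinates. -/
noncomputable def projM (k : Type) [Field k] (n : ℕ) : (MRep k).V 0 →ₗ[k] (Fin n → k) :=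
  LinearMap.pi fun j => coordM k 0 (j : ℕ)

lemma ker_projM (n : ℕ) :
    LinearMap.ker (projM k n) = LinearMap.range ((MRep k).map (hnle n)) := by
  ext x
  simp only [LinearMap.mem_ker]
  constructor
  · intro h
    refine mem_rangeM_of fun i hi => ?_
    have := congrFun h ⟨i, hi⟩
    simpa [projM] using this
  · intro h
    funext j
    have := mem_rangeM h j.2
    simpa [projM] using this

lemma finite_quot_M (n : ℕ) :
    Module.Finite k ((MRep k).V 0 ⧸ LinearMap.range ((MRep k).map (hnle n))) := by
  rw [← ker_projM]
  exact Module.Finite.equiv (LinearMap.quotKerEquivRange (projM k n)).symm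

lemma aleph0_lt_rank_M : ℵ₀ < Module.rank k ((MRep k).V 0) := by
  have e : (∀ i : ℕ, ↥(if (0 : ℝ) ∈ Set.Ici (-(i : ℝ)) then (⊤ : Submodule k k) else ⊥))
      ≃ₗ[k] (ℕ → k) :=
    LinearEquiv.piCongrRight fun i =>
      (LinearEquiv.ofEq _ _ (if_pos (zero_mem_Ici i))) ≪≫ₗ Submodule.topEquiv
  have hrank : Module.rank k ((MRep k).V 0) = Module.rank k (ℕ → k) := e.rank_eq
  rw [hrank, rank_fun_infinite, Cardinal.mk_arrow]
  have h2 : (2 : Cardinal) ≤ Cardinal.lift.{0} #k := by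
    rw [Cardinal.lift_id, Cardinal.two_le_iff]
    exact exists_pair_ne k
  calc ℵ₀ < 2 ^ ℵ₀ := Cardinal.cantor _
    _ ≤ Cardinal.lift.{0} #k ^ Cardinal.lift.{0} #ℕ := by
        rw [Cardinal.mk_nat, Cardinal.lift_aleph0]
        exact Cardinal.power_le_power_right h2

section Dside

variable {ι : Type} (J : ι → Set ℝ) (hJ : ∀ i, IsConvex (J i))

/-- The canonical generator of the `l`-th summand at time `t`. -/
noncomputable def epsAt (t : ℝ) (l : ι) : (DRep k J hJ).V t :=
  letI := Classical.decEq ι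
  DirectSum.lof k ι (fun j => (intervalRep ℝ k (J j) (hJ j)).V t) l
    ⟨if t ∈ J l then 1 else 0, by split_ifs <;> first | exact Submodule.mem_top | exact Submodule.zero_mem _⟩

/-- The `l`-th coordinate of `DRep` at time `t`, as a linear functional. -/
noncomputable def coordD (t : ℝ) (l : ι) : (DRep k J hJ).V t →ₗ[k] k :=
  (valIR (J l) (hJ l) t).comp
    (DirectSum.component k ι (fun j => (intervalRep ℝ k (J j) (hJ j)).V t) l)

lemma component_mapD (l : ι) {s t : ℝ} (h : s ≤ t) (z : (DRep k J hJ).V s) :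
    DirectSum.component k ι (fun j => (intervalRep ℝ k (J j) (hJ j)).V t) l
        ((DRep k J hJ).map h z)
      = (intervalRep ℝ k (J l) (hJ l)).map h
        (DirectSum.component k ι (fun j => (intervalRep ℝ k (J j) (hJ j)).V s) l z) := by
  letI := Classical.decEq ι
  have key : (DirectSum.component k ι (fun j => (intervalRep ℝ k (J j) (hJ j)).V t) l).comp
        ((DRep k J hJ).map h)
      = ((intervalRep ℝ k (J l) (hJ l)).map h).comp
        (DirectSum.component k ι (fun j => (intervalRep ℝ k (J j) (hJ j)).V s) l) := by
    refine DirectSum.linearMap_ext k fun j => ?_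
    ext x
    by_cases hjl : j = l
    · subst hjl
      have e : (DRep k J hJ).map h
            (DirectSum.lof k ι (fun i => (intervalRep ℝ k (J i) (hJ i)).V s) j x)
          = DirectSum.lof k ι (fun i => (intervalRep ℝ k (J i) (hJ i)).V t) j
            ((intervalRep ℝ k (J j) (hJ j)).map h x) :=
        DirectSum.toModule_lof (R := k)
          (N := ⨁ i, (intervalRep ℝ k (J i) (hJ i)).V t) _ _
      exact (congrArg (DirectSum.component k ι (fun j => (intervalRep ℝ k (J j) (hJ j)).V t) j)
        e).trans (by rw [DirectSum.component.lof_self, LinearMap.comp_apply, LinearMap.comp_apply,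
          DirectSum.component.lof_self])
    · have e : (DRep k J hJ).map h
            (DirectSum.lof k ι (fun i => (intervalRep ℝ k (J i) (hJ i)).V s) j x)
          = DirectSum.lof k ι (fun i => (intervalRep ℝ k (J i) (hJ i)).V t) j
            ((intervalRep ℝ k (J j) (hJ j)).map h x) :=
        DirectSum.toModule_lof (R := k)
          (N := ⨁ i, (intervalRep ℝ k (J i) (hJ i)).V t) _ _
      exact (congrArg (DirectSum.component k ι (fun j => (intervalRep ℝ k (J j) (hJ j)).V t) l)
        e).trans (by rw [DirectSum.component.of, dif_neg hjl, LinearMap.comp_apply, LinearMap.comp_apply,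
          DirectSum.component.of, dif_neg hjl, map_zero])
  exact DFunLike.congr_fun key z

lemma coordD_map {s t : ℝ} (h : s ≤ t) (z : (DRep k J hJ).V s) (l : ι) :
    coordD J hJ t l ((DRep k J hJ).map h z)
      = if t ∈ J l then coordD J hJ s l z else 0 :=
  congrArg Subtype.val (component_mapD J hJ l h z)

lemma coordD_lof (t : ℝ) (l l' : ι) (v : (intervalRep ℝ k (J l) (hJ l)).V t) :
    coordD J hJ t l'
        (@DirectSum.lof k _ ι
          (fun j => (intervalRep ℝ k (J j) (hJ j)).V t) _ _ (Classical.decEq ι) l v)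
      = if l = l' then valIR (J l) (hJ l) t v else 0 := by
  letI := Classical.decEq ι
  show valIR (J l') (hJ l') t (DirectSum.component k ι
      (fun j => (intervalRep ℝ k (J j) (hJ j)).V t) l'
      (DirectSum.lof k ι (fun j => (intervalRep ℝ k (J j) (hJ j)).V t) l v)) = _
  rw [DirectSum.component.of]
  by_cases hll : l = l'
  · subst hll
    rw [dif_pos rfl, if_pos rfl]
  · rw [dif_neg hll, if_neg hll, map_zero]

lemma coordD_epsAt (t : ℝ) (l l' : ι) :
    coordD (k := k) J hJ t l' (epsAt J hJ t l)
      = if l = l' then (if t ∈ J l then (1 : k) else 0) else 0 := by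
  rw [epsAt]
  exact coordD_lof J hJ t l l' _

lemma map_epsAt {s t : ℝ} (h : s ≤ t) {l : ι} (hs : s ∈ J l) :
    (DRep k J hJ).map h (epsAt J hJ s l) = epsAt J hJ t l := by
  refine DirectSum.ext fun l' => ?_
  apply Subtype.ext
  show coordD J hJ t l' ((DRep k J hJ).map h (epsAt J hJ s l))
      = coordD J hJ t l' (epsAt J hJ t l)
  rw [coordD_map, coordD_epsAt, coordD_epsAt]
  by_cases hl' : l = l'
  · subst hl'
    by_cases ht : t ∈ J l <;> simp [ht, hs]
  · simp [hl']

lemma epsAt_ne_zero {t : ℝ} {l : ι} (h0 : t ∈ J l) :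
    epsAt (k := k) J hJ t l ≠ 0 := by
  intro hc
  have h1 : coordD (k := k) J hJ t l (epsAt J hJ t l) = 0 := by
    rw [hc, map_zero]
  rw [coordD_epsAt, if_pos rfl, if_pos h0] at h1
  exact one_ne_zero h1

lemma coordD_eq_zero_of_mem_range {n : ℕ} {l : ι} (hl : (-(n : ℝ)) ∉ J l)
    {y : (DRep k J hJ).V 0}
    (hy : y ∈ LinearMap.range ((DRep k J hJ).map (hnle n))) :
    coordD J hJ 0 l y = 0 := by
  obtain ⟨z, rfl⟩ := hy
  rw [coordD_map]
  by_cases h0 : (0 : ℝ) ∈ J l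
  · rw [if_pos h0]
    exact valIR_eq_zero hl _
  · rw [if_neg h0]

lemma span_eps_top :
    ⊤ ≤ Submodule.span k ((fun l => epsAt (k := k) J hJ 0 l) '' {l : ι | 0 ∈ J l}) := by
  letI := Classical.decEq ι
  intro z _
  induction z using DirectSum.induction_on with
  | zero => exact Submodule.zero_mem _
  | of j y =>
    rw [← DirectSum.lof_eq_of k]
    by_cases h0 : (0 : ℝ) ∈ J j
    · have hy : DirectSum.lof k ι (fun j => (intervalRep ℝ k (J j) (hJ j)).V 0) j y
          = (valIR (J j) (hJ j) 0 y) • epsAt J hJ 0 j := by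
        refine DirectSum.ext fun l' => ?_
        apply Subtype.ext
        show coordD J hJ 0 l'
            (DirectSum.lof k ι (fun j => (intervalRep ℝ k (J j) (hJ j)).V 0) j y)
          = coordD J hJ 0 l' ((valIR (J j) (hJ j) 0 y) • epsAt J hJ 0 j)
        rw [(coordD J hJ 0 l').map_smul, coordD_lof, coordD_epsAt]
        by_cases hjl : j = l'
        · rw [if_pos hjl, if_pos hjl, if_pos h0, smul_eq_mul, mul_one]
        · rw [if_neg hjl, if_neg hjl, smul_zero]
      rw [hy]
      exact Submodule.smul_mem _ _ (Submodule.subset_span ⟨j, h0, rfl⟩)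
    · have hy : y = 0 := Subtype.ext (valIR_eq_zero (k := k) h0 y)
      rw [hy, map_zero]
      exact Submodule.zero_mem _
  | add a b ha hb => exact Submodule.add_mem _ (ha trivial) (hb trivial)

lemma rank_D_le (hcount : {l : ι | 0 ∈ J l}.Countable) :
    Module.rank k ((DRep k J hJ).V 0) ≤ ℵ₀ := by
  have hspan : Submodule.span k
      ((fun l => epsAt (k := k) J hJ 0 l) '' {l : ι | 0 ∈ J l}) = ⊤ :=
    le_antisymm le_top (span_eps_top J hJ)
  have h1 := rank_span_le (R := k)
    ((fun l => epsAt (k := k) J hJ 0 l) '' {l : ι | 0 ∈ J l})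
  rw [hspan] at h1
  rw [← rank_top k ((DRep k J hJ).V 0)]
  refine h1.trans ?_
  have hc := hcount.image (fun l => epsAt (k := k) J hJ 0 l)
  exact Cardinal.mk_le_aleph0_iff.mpr hc.to_subtype

end Dside

end AuxProof

/-- The product `∏_{i ∈ ℕ} k_{[-i,∞)}` of interval representations of the real
line is not isomorphic to any direct sum of interval representations. -/
theorem prod_not_interval_decomposable (k : Type) [Field k] :
    ¬ ∃ (ι : Type) (J : ι → Set ℝ) (hJ : ∀ i, IsConvex (J i)),
        Nonempty (PersIso
          (prodRep k ℕ (fun i => intervalRep ℝ k (Set.Ici (-(i : ℝ))) (isConvex_Ici _)))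
          (dSum k ι (fun i => intervalRep ℝ k (J i) (hJ i)))) := by
  rintro ⟨ι, J, hJ, ⟨σ⟩⟩
  have σ' : PersIso (MRep k) (DRep k J hJ) := σ
  -- transport of images
  have hF_eq : ∀ n : ℕ,
      Submodule.map (σ'.e 0 : (MRep k).V 0 →ₗ[k] (DRep k J hJ).V 0)
        (LinearMap.range ((MRep k).map (hnle n)))
      = LinearMap.range ((DRep k J hJ).map (hnle n)) := by
    intro n
    have key : ((DRep k J hJ).map (hnle n)).comp
          (σ'.e (-(n : ℝ)) : (MRep k).V (-(n : ℝ)) →ₗ[k] (DRep k J hJ).V (-(n : ℝ)))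
        = ((σ'.e 0 : (MRep k).V 0 →ₗ[k] (DRep k J hJ).V 0)).comp
          ((MRep k).map (hnle n)) := by
      ext x
      exact (σ'.natural (hnle n) x).symm
    calc Submodule.map (σ'.e 0 : (MRep k).V 0 →ₗ[k] (DRep k J hJ).V 0)
          (LinearMap.range ((MRep k).map (hnle n)))
        = LinearMap.range (((σ'.e 0 : (MRep k).V 0 →ₗ[k] (DRep k J hJ).V 0)).comp
            ((MRep k).map (hnle n))) := (LinearMap.range_comp _ _).symm
      _ = LinearMap.range (((DRep k J hJ).map (hnle n)).comp
            (σ'.e (-(n : ℝ)) : (MRep k).V (-(n : ℝ)) →ₗ[k] (DRep k J hJ).V (-(n : ℝ)))) := by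
          rw [key]
      _ = Submodule.map ((DRep k J hJ).map (hnle n))
            (LinearMap.range (σ'.e (-(n : ℝ)) :
              (MRep k).V (-(n : ℝ)) →ₗ[k] (DRep k J hJ).V (-(n : ℝ)))) :=
          LinearMap.range_comp _ _
      _ = Submodule.map ((DRep k J hJ).map (hnle n)) ⊤ := by
          rw [LinearEquiv.range]
      _ = LinearMap.range ((DRep k J hJ).map (hnle n)) := Submodule.map_top _
  -- each "born exactly in (-n, 0]" index set is finite
  have hTfin : ∀ n : ℕ, {l : ι | 0 ∈ J l ∧ (-(n : ℝ)) ∉ J l}.Finite := by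
    intro n
    haveI hQfin : Module.Finite k
        ((DRep k J hJ).V 0 ⧸ LinearMap.range ((DRep k J hJ).map (hnle n))) := by
      haveI := finite_quot_M (k := k) n
      exact Module.Finite.equiv (Submodule.Quotient.equiv _ _ (σ'.e 0) (hF_eq n))
    have hli : LinearIndependent k
        (fun l : {l : ι | 0 ∈ J l ∧ (-(n : ℝ)) ∉ J l} =>
          Submodule.mkQ (LinearMap.range ((DRep k J hJ).map (hnle n)))
            (epsAt J hJ 0 l.1)) := by
      rw [linearIndependent_iff']
      intro s g hsum i0 hi0
      have hmem : (∑ i ∈ s, g i • epsAt J hJ 0 i.1)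
          ∈ LinearMap.range ((DRep k J hJ).map (hnle n)) := by
        rw [← Submodule.Quotient.mk_eq_zero, ← Submodule.mkQ_apply, map_sum]
        simp_rw [map_smul]
        exact hsum
      have hcoord := coordD_eq_zero_of_mem_range J hJ i0.2.2 hmem
      rw [map_sum, Finset.sum_eq_single_of_mem i0 hi0 (fun b _ hne => by
        rw [map_smul, coordD_epsAt, if_neg (fun hb1 => hne (Subtype.ext hb1)),
          smul_zero])] at hcoord
      rw [map_smul, coordD_epsAt, if_pos rfl, if_pos i0.2.1, smul_eq_mul,
        mul_one] at hcoord
      exact hcoord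
    haveI : Finite {l : ι | 0 ∈ J l ∧ (-(n : ℝ)) ∉ J l} := hli.finite_of_isNoetherian
    exact Set.toFinite _
  -- every interval containing 0 misses some -n
  have hsub : {l : ι | 0 ∈ J l} ⊆ ⋃ n : ℕ, {l : ι | 0 ∈ J l ∧ (-(n : ℝ)) ∉ J l} := by
    intro l hl
    simp only [Set.mem_iUnion, Set.mem_setOf_eq]
    by_contra hcon
    push_neg at hcon
    have hall : ∀ n : ℕ, (-(n : ℝ)) ∈ J l := fun n => hcon n hl
    have heps : ∀ n : ℕ, epsAt J hJ 0 l
        ∈ LinearMap.range ((DRep k J hJ).map (hnle n)) :=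
      fun n => ⟨epsAt J hJ (-(n : ℝ)) l, map_epsAt J hJ (hnle n) (hall n)⟩
    have hx : ∀ n : ℕ, (σ'.e 0).symm (epsAt J hJ 0 l)
        ∈ LinearMap.range ((MRep k).map (hnle n)) := by
      intro n
      have h1 := heps n
      rw [← hF_eq n] at h1
      obtain ⟨w, hw, hwe⟩ := h1
      have hw2 : w = (σ'.e 0).symm (epsAt J hJ 0 l) := by
        apply (σ'.e 0).injective
        rw [LinearEquiv.apply_symm_apply]
        exact hwe
      rwa [← hw2]
    have h0 : (σ'.e 0).symm (epsAt J hJ 0 l) = 0 := eq_zero_of_mem_all hx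
    have h1 : epsAt (k := k) J hJ 0 l = 0 := by
      rw [← LinearEquiv.apply_symm_apply (σ'.e 0) (epsAt J hJ 0 l), h0, map_zero]
    exact epsAt_ne_zero J hJ hl h1
  have hcount : {l : ι | 0 ∈ J l}.Countable :=
    (Set.countable_iUnion fun n => (hTfin n).countable).mono hsub
  have h1 := rank_D_le (k := k) J hJ hcount
  have h2 := aleph0_lt_rank_M (k := k)
  have h3 : Module.rank k ((MRep k).V 0) = Module.rank k ((DRep k J hJ).V 0) :=
    (σ'.e 0).rank_eq
  rw [h3] at h2
  exact absurd h1 (not_le.mpr h2)
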